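/- arXiv:1912.01776 — 3 statements merged into one kernel-verified Lean document; each statement's English description precedes it below -/
import Mathlib

section
/- Let R₀ be an invertible k×k real matrix, s a 1×k real row vector, and t a real scalar with γ := t − s R₀⁻¹ sᵀ ≠ 0. Let C₀ be a k×r real matrix and u a 1×r real row vector, and form the (k+1)×(k+1) block matrix R₁ = [[R₀, sᵀ], [s, t]] and the (k+1)×r matrix C₁ obtained by appending the row u below C₀. Then C₁ᵀ R₁⁻¹ C₁ = C₀ᵀ R₀⁻¹ C₀ + (1/γ) (C₀ᵀ R₀⁻¹ sᵀ − uᵀ)(s R₀⁻¹ C₀ − u). -/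
open Matrix

lemma one_by_one_eq (M : Matrix (Fin 1) (Fin 1) ℝ) : M = (M 0 0) • 1 := by
  ext i j
  fin_cases i <;> fin_cases j <;> simp

/-- Rank-one update of the weighted Gram matrix: with `R₁ = [[R₀, sᵀ], [s, t]]`,
Schur complement `γ = t − s R₀⁻¹ sᵀ ≠ 0`, and `C₁` obtained from `C₀` by appending
the row `u`, one has
`C₁ᵀ R₁⁻¹ C₁ = C₀ᵀ R₀⁻¹ C₀ + γ⁻¹ (C₀ᵀ R₀⁻¹ sᵀ − uᵀ)(s R₀⁻¹ C₀ − u)`. -/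
theorem stmt_6 {k r : ℕ}
    (R₀ : Matrix (Fin k) (Fin k) ℝ) (hR₀ : IsUnit R₀.det)
    (s : Matrix (Fin 1) (Fin k) ℝ) (t : ℝ)
    (γ : ℝ) (hγ : γ = t - (s * R₀⁻¹ * sᵀ) 0 0) (hγ0 : γ ≠ 0)
    (C₀ : Matrix (Fin k) (Fin r) ℝ) (u : Matrix (Fin 1) (Fin r) ℝ)
    (R₁ : Matrix (Fin k ⊕ Fin 1) (Fin k ⊕ Fin 1) ℝ)
    (hR₁ : R₁ = fromBlocks R₀ sᵀ s (t • (1 : Matrix (Fin 1) (Fin 1) ℝ)))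
    (C₁ : Matrix (Fin k ⊕ Fin 1) (Fin r) ℝ) (hC₁ : C₁ = fromRows C₀ u) :
    C₁ᵀ * R₁⁻¹ * C₁
      = C₀ᵀ * R₀⁻¹ * C₀ + γ⁻¹ • ((C₀ᵀ * R₀⁻¹ * sᵀ - uᵀ) * (s * R₀⁻¹ * C₀ - u)) := by
  set A := R₀⁻¹ with hA
  have hRA : R₀ * A = 1 := mul_nonsing_inv R₀ hR₀
  have hAR : A * R₀ = 1 := nonsing_inv_mul R₀ hR₀
  have hss : s * A * sᵀ = (t - γ) • 1 := by
    rw [one_by_one_eq (s * A * sᵀ)]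
    rw [hγ]; ring_nf
  have hinv : R₁⁻¹ = fromBlocks (A + γ⁻¹ • (A * sᵀ * (s * A))) (-(γ⁻¹ • (A * sᵀ)))
      (-(γ⁻¹ • (s * A))) (γ⁻¹ • (1 : Matrix (Fin 1) (Fin 1) ℝ)) := by
    rw [hR₁]
    apply inv_eq_right_inv
    rw [fromBlocks_multiply]
    have h11 : R₀ * (A + γ⁻¹ • (A * sᵀ * (s * A))) + sᵀ * -(γ⁻¹ • (s * A)) = 1 := by
      simp only [Matrix.mul_add, Matrix.mul_smul, Matrix.mul_neg, ← Matrix.mul_assoc, hRA]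
      simp [Matrix.mul_assoc]
    have h12 : R₀ * -(γ⁻¹ • (A * sᵀ)) + sᵀ * (γ⁻¹ • (1 : Matrix (Fin 1) (Fin 1) ℝ)) = 0 := by
      simp only [Matrix.mul_neg, Matrix.mul_smul, ← Matrix.mul_assoc, hRA]
      simp
    have h21 : s * (A + γ⁻¹ • (A * sᵀ * (s * A))) +
        (t • (1 : Matrix (Fin 1) (Fin 1) ℝ)) * -(γ⁻¹ • (s * A)) = 0 := by
      have : s * (A * sᵀ * (s * A)) = (t - γ) • (s * A) := by
        calc s * (A * sᵀ * (s * A)) = (s * A * sᵀ) * (s * A) := by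
              simp only [Matrix.mul_assoc]
          _ = (t - γ) • (s * A) := by rw [hss]; simp
      simp only [Matrix.mul_add, Matrix.mul_smul, Matrix.mul_neg, Matrix.smul_mul, this,
        Matrix.one_mul, smul_smul]
      have hc : γ⁻¹ * (t - γ) = γ⁻¹ * t - 1 := by field_simp
      rw [hc, sub_smul, one_smul]
      try abel
    have h22 : s * -(γ⁻¹ • (A * sᵀ)) +
        (t • (1 : Matrix (Fin 1) (Fin 1) ℝ)) * (γ⁻¹ • (1 : Matrix (Fin 1) (Fin 1) ℝ)) = 1 := by
      simp only [Matrix.mul_neg, Matrix.mul_smul, ← Matrix.mul_assoc, hss, Matrix.smul_mul,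
        Matrix.one_mul, Matrix.mul_one, smul_smul]
      have hc : γ⁻¹ * (t - γ) = γ⁻¹ * t - 1 := by field_simp
      rw [hc, sub_smul, one_smul]
      try abel
    rw [h11, h12, h21, h22, fromBlocks_one]
  rw [hC₁, hinv, transpose_fromRows, fromCols_mul_fromBlocks, fromCols_mul_fromRows]
  simp only [Matrix.add_mul, Matrix.mul_add, Matrix.mul_neg, Matrix.neg_mul, Matrix.mul_smul,
    Matrix.smul_mul, Matrix.mul_one, Matrix.sub_mul, Matrix.mul_sub, smul_sub, smul_add,
    ← Matrix.mul_assoc]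
  abel
end

section
/- Let R₀ be a k×k real symmetric positive definite matrix, s a 1×k real row vector, and t a real scalar with γ := t − s R₀⁻¹ sᵀ > 0; let C₀ be a k×r real matrix, u a 1×r real row vector, and Q an r×r real symmetric positive definite matrix. Set W₀ := C₀ᵀ R₀⁻¹ C₀ + Q⁻¹, R₁ = [[R₀, sᵀ], [s, t]], and let C₁ be C₀ with the row u appended. Then det(C₁ᵀ R₁⁻¹ C₁ + Q⁻¹) ≥ det(W₀); that is, appending any candidate sensor never decreases the determinant of the regularized Fisher information matrix. -/
open Matrix

/-- Monotonicity of the greedy objective: with `R₀` symmetric positive definite,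
Schur complement `γ = t − s R₀⁻¹ sᵀ > 0`, `Q` symmetric positive definite,
`W₀ = C₀ᵀ R₀⁻¹ C₀ + Q⁻¹`, `R₁ = [[R₀, sᵀ], [s, t]]`, and `C₁` obtained from `C₀` by
appending the row `u`, appending any candidate sensor never decreases the determinant:
`det(C₁ᵀ R₁⁻¹ C₁ + Q⁻¹) ≥ det W₀`. -/
theorem stmt_8 {k r : ℕ}
    (R₀ : Matrix (Fin k) (Fin k) ℝ) (hR₀ : R₀.PosDef)
    (s : Matrix (Fin 1) (Fin k) ℝ) (t : ℝ)
    (γ : ℝ) (hγ : γ = t - (s * R₀⁻¹ * sᵀ) 0 0) (hγ0 : 0 < γ)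
    (C₀ : Matrix (Fin k) (Fin r) ℝ) (u : Matrix (Fin 1) (Fin r) ℝ)
    (Q : Matrix (Fin r) (Fin r) ℝ) (hQ : Q.PosDef)
    (W₀ : Matrix (Fin r) (Fin r) ℝ) (hW₀ : W₀ = C₀ᵀ * R₀⁻¹ * C₀ + Q⁻¹)
    (R₁ : Matrix (Fin k ⊕ Fin 1) (Fin k ⊕ Fin 1) ℝ)
    (hR₁ : R₁ = fromBlocks R₀ sᵀ s (t • (1 : Matrix (Fin 1) (Fin 1) ℝ)))
    (C₁ : Matrix (Fin k ⊕ Fin 1) (Fin r) ℝ) (hC₁ : C₁ = fromRows C₀ u) :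
    (C₁ᵀ * R₁⁻¹ * C₁ + Q⁻¹).det ≥ W₀.det := by
  -- Basic facts about `R₀`
  have hdet : IsUnit R₀.det := hR₀.det_pos.ne'.isUnit
  have hR1 : R₀ * R₀⁻¹ = 1 := mul_nonsing_inv _ hdet
  have hsAs : s * R₀⁻¹ * sᵀ = (t - γ) • (1 : Matrix (Fin 1) (Fin 1) ℝ) := by
    have h00 : (s * R₀⁻¹ * sᵀ) 0 0 = t - γ := by rw [hγ]; ring
    ext i j
    fin_cases i <;> fin_cases j <;> simp [h00]
  -- Explicit inverse of the block matrix `R₁`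
  have hinv : R₁⁻¹ =
      fromBlocks (R₀⁻¹ + γ⁻¹ • (R₀⁻¹ * sᵀ * (s * R₀⁻¹))) (-(γ⁻¹ • (R₀⁻¹ * sᵀ)))
        (-(γ⁻¹ • (s * R₀⁻¹))) (γ⁻¹ • (1 : Matrix (Fin 1) (Fin 1) ℝ)) := by
    rw [hR₁]
    have hgrp2 : R₀ * (R₀⁻¹ * sᵀ) = sᵀ := by
      rw [← Matrix.mul_assoc, hR1, Matrix.one_mul]
    have hgrp : R₀ * (R₀⁻¹ * sᵀ * (s * R₀⁻¹)) = sᵀ * (s * R₀⁻¹) := by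
      rw [← Matrix.mul_assoc, hgrp2]
    have hgrp4 : s * (R₀⁻¹ * sᵀ) = (t - γ) • (1 : Matrix (Fin 1) (Fin 1) ℝ) := by
      rw [← Matrix.mul_assoc, hsAs]
    have hgrp3 : s * (R₀⁻¹ * sᵀ * (s * R₀⁻¹)) = (t - γ) • (s * R₀⁻¹) := by
      rw [← Matrix.mul_assoc, hgrp4, Matrix.smul_mul, Matrix.one_mul]
    apply inv_eq_right_inv
    rw [fromBlocks_multiply]
    have h11 : R₀ * (R₀⁻¹ + γ⁻¹ • (R₀⁻¹ * sᵀ * (s * R₀⁻¹))) + sᵀ * -(γ⁻¹ • (s * R₀⁻¹)) = 1 := by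
      rw [Matrix.mul_add, Matrix.mul_smul, Matrix.mul_neg, Matrix.mul_smul, hR1, hgrp]
      abel
    have h12 : R₀ * -(γ⁻¹ • (R₀⁻¹ * sᵀ)) + sᵀ * (γ⁻¹ • (1 : Matrix (Fin 1) (Fin 1) ℝ)) = 0 := by
      rw [Matrix.mul_neg, Matrix.mul_smul, Matrix.mul_smul, Matrix.mul_one, hgrp2]
      abel
    have h21 : s * (R₀⁻¹ + γ⁻¹ • (R₀⁻¹ * sᵀ * (s * R₀⁻¹))) +
        (t • (1 : Matrix (Fin 1) (Fin 1) ℝ)) * -(γ⁻¹ • (s * R₀⁻¹)) = 0 := by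
      rw [Matrix.mul_add, Matrix.mul_smul, hgrp3, Matrix.mul_neg, Matrix.mul_smul,
        Matrix.smul_mul, Matrix.one_mul, smul_smul]
      match_scalars
      field_simp
      ring
    have h22 : s * -(γ⁻¹ • (R₀⁻¹ * sᵀ)) +
        (t • (1 : Matrix (Fin 1) (Fin 1) ℝ)) * (γ⁻¹ • (1 : Matrix (Fin 1) (Fin 1) ℝ)) = 1 := by
      rw [Matrix.mul_neg, Matrix.mul_smul, hgrp4, Matrix.mul_smul, Matrix.smul_mul,
        Matrix.one_mul, smul_smul, smul_smul]
      match_scalars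
      field_simp
      ring
    rw [h11, h12, h21, h22, fromBlocks_one]
  -- The residual row vector
  set v : Matrix (Fin 1) (Fin r) ℝ := u - s * R₀⁻¹ * C₀ with hv
  -- Key identity: the new information matrix is the old one plus a rank-one update
  have hkey : C₁ᵀ * R₁⁻¹ * C₁ + Q⁻¹ = W₀ + (γ⁻¹ • vᵀ) * v := by
    have hRinvT : (R₀⁻¹)ᵀ = R₀⁻¹ := by
      have h := hR₀.isHermitian.inv
      rw [← Matrix.conjTranspose_eq_transpose_of_trivial]; exact h
    have hprod : C₁ᵀ * R₁⁻¹ * C₁ = C₀ᵀ * R₀⁻¹ * C₀ + γ⁻¹ • (vᵀ * v) := by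
      rw [hinv, hC₁, hv, transpose_fromRows, fromCols_mul_fromBlocks,
        fromCols_mul_fromRows]
      simp only [Matrix.transpose_sub, Matrix.transpose_mul, hRinvT]
      simp only [Matrix.mul_add, Matrix.add_mul, Matrix.mul_sub, Matrix.sub_mul,
        Matrix.mul_smul, Matrix.smul_mul, Matrix.mul_neg, Matrix.neg_mul, Matrix.mul_one,
        Matrix.one_mul, Matrix.mul_assoc, smul_smul, smul_sub, smul_add]
      match_scalars <;> ring
    rw [hprod, hW₀, Matrix.smul_mul]
    abel
  -- `W₀` is positive definite
  have hT : ∀ {a b : ℕ} (M : Matrix (Fin a) (Fin b) ℝ), Mᴴ = Mᵀ := by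
    intro a b M; ext i j; simp [Matrix.conjTranspose_apply]
  have hW₀pd : W₀.PosDef := by
    rw [hW₀]
    refine Matrix.PosDef.posSemidef_add ?_ hQ.inv
    have := hR₀.inv.posSemidef.conjTranspose_mul_mul_same C₀
    rwa [hT] at this
  have hW₀det : IsUnit W₀.det := hW₀pd.det_pos.ne'.isUnit
  -- Rank-one determinant update
  rw [hkey, Matrix.det_add_mul (γ⁻¹ • vᵀ) v hW₀det]
  have hquad : 0 ≤ (v * W₀⁻¹ * vᵀ) 0 0 := by
    have hps : W₀⁻¹.PosSemidef := hW₀pd.inv.posSemidef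
    have h := hps.dotProduct_mulVec_nonneg (fun j => v 0 j)
    simp only [RCLike.star_def, star_trivial] at h
    have heq : (v * W₀⁻¹ * vᵀ) 0 0 = (fun j => v 0 j) ⬝ᵥ (W₀⁻¹ *ᵥ fun j => v 0 j) := by
      simp only [Matrix.mul_apply, Matrix.transpose_apply, dotProduct, Matrix.mulVec,
        dotProduct, Finset.sum_mul, Finset.mul_sum]
      rw [Finset.sum_comm]
      exact Finset.sum_congr rfl fun i _ => Finset.sum_congr rfl fun j _ => by ring
    rw [heq]
    exact h
  have hdet1 : (1 + v * W₀⁻¹ * (γ⁻¹ • vᵀ)).det = 1 + γ⁻¹ * (v * W₀⁻¹ * vᵀ) 0 0 := by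
    rw [Matrix.mul_smul, Matrix.det_fin_one]
    simp
  rw [hdet1]
  have h1 : (1 : ℝ) ≤ 1 + γ⁻¹ * (v * W₀⁻¹ * vᵀ) 0 0 := by
    have : 0 ≤ γ⁻¹ * (v * W₀⁻¹ * vᵀ) 0 0 :=
      mul_nonneg (by positivity) hquad
    linarith
  calc W₀.det = W₀.det * 1 := by ring
    _ ≤ W₀.det * (1 + γ⁻¹ * (v * W₀⁻¹ * vᵀ) 0 0) := by
        exact mul_le_mul_of_nonneg_left h1 hW₀pd.det_pos.le
end

section
/- Let C be a k×r real matrix with C Cᵀ positive definite, let I be a finite nonempty index set, and for each i ∈ I let uᵢ be a 1×r real row vector; let Cᵢ' denote the (k+1)×r matrix obtained by appending the row uᵢ below C. Then for any i, j ∈ I, det(Cᵢ' Cᵢ'ᵀ) ≥ det(Cⱼ' Cⱼ'ᵀ) if and only if uᵢ (I_r − Cᵀ (C Cᵀ)⁻¹ C) uᵢᵀ ≥ uⱼ (I_r − Cᵀ (C Cᵀ)⁻¹ C) uⱼᵀ; consequently an index maximizes det(Cᵢ' Cᵢ'ᵀ) over I exactly when it maximizes the scalar uᵢ (I_r − Cᵀ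 (C Cᵀ)⁻¹ C) uᵢᵀ. -/
open Matrix

/-- Correctness of the greedy selection step in the underdetermined regime: if `C Cᵀ` is
positive definite and, for each candidate `i`, `Cᵢ'` is `C` with the row `uᵢ` appended,
then comparing `det(Cᵢ' Cᵢ'ᵀ)` between candidates is equivalent to comparing the scalar
`uᵢ (I − Cᵀ (C Cᵀ)⁻¹ C) uᵢᵀ`; consequently an index maximizes the determinant over the
candidate set exactly when it maximizes the scalar criterion. -/
theorem stmt_15 {k r : ℕ} {ι : Type*} [Fintype ι] [Nonempty ι]
    (C : Matrix (Fin k) (Fin r) ℝ) (hC : (C * Cᵀ).PosDef)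
    (u : ι → Matrix (Fin 1) (Fin r) ℝ)
    (C' : ι → Matrix (Fin k ⊕ Fin 1) (Fin r) ℝ)
    (hC' : ∀ i, C' i = fromRows C (u i))
    (φ : ι → ℝ)
    (hφ : ∀ i, φ i
      = (u i * ((1 : Matrix (Fin r) (Fin r) ℝ) - Cᵀ * (C * Cᵀ)⁻¹ * C) * (u i)ᵀ) 0 0) :
    (∀ i j : ι, (C' j * (C' j)ᵀ).det ≤ (C' i * (C' i)ᵀ).det ↔ φ j ≤ φ i) ∧
      (∀ i : ι, (∀ j : ι, (C' j * (C' j)ᵀ).det ≤ (C' i * (C' i)ᵀ).det)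
        ↔ (∀ j : ι, φ j ≤ φ i)) := by
  have hdet : (C * Cᵀ).det ≠ 0 := ne_of_gt hC.det_pos
  haveI : Invertible (C * Cᵀ) := invertibleOfIsUnitDet _ (isUnit_iff_ne_zero.mpr hdet)
  have key : ∀ i, (C' i * (C' i)ᵀ).det = (C * Cᵀ).det * φ i := by
    intro i
    rw [hC' i, transpose_fromRows, fromRows_mul_fromCols, det_fromBlocks₁₁,
      invOf_eq_nonsing_inv, hφ i]
    congr 1
    have : u i * (u i)ᵀ - u i * Cᵀ * (C * Cᵀ)⁻¹ * (C * (u i)ᵀ)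
        = u i * ((1 : Matrix (Fin r) (Fin r) ℝ) - Cᵀ * (C * Cᵀ)⁻¹ * C) * (u i)ᵀ := by
      simp only [Matrix.mul_sub, Matrix.mul_one, Matrix.sub_mul, Matrix.mul_assoc]
    rw [this, det_fin_one]
  have hpos : 0 < (C * Cᵀ).det := hC.det_pos
  have hiff : ∀ i j : ι, (C' j * (C' j)ᵀ).det ≤ (C' i * (C' i)ᵀ).det ↔ φ j ≤ φ i := by
    intro i j
    rw [key i, key j]
    exact mul_le_mul_iff_right₀ hpos
  exact ⟨hiff, fun i => forall_congr' fun j => hiff i j⟩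
end
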